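/- Let P = Σ_{i=0}^m A_i X^i be a polynomial over FDDS (possibly with constant term A_0). If at least one non-constant coefficient A_i with i ≥ 1 is cancelable, then P is injective up to isomorphism: for all FDDS X, Y, if P(X) ≅ P(Y) then X ≅ Y. -/

import Mathlib

/-- Isomorphism of finite dynamical systems: a bijection commuting with the maps. -/
def FddsIso {α β : Type} (f : α → α) (g : β → β) : Prop :=
  ∃ e : α ≃ β, ⇑e ∘ f = g ∘ ⇑e

/-- A state is periodic if some positive iterate fixes it. -/
def IsPeriodicState {α : Type} (f : α → α) (x : α) : Prop :=
  ∃ n > 0, f^[n] x = x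

/-- The vertex set of the unroll of `(α, f)`. -/
def UnrollSet {α : Type} (f : α → α) : Set (α × ℕ) :=
  {p | IsPeriodicState f (f^[p.2] p.1)}

/-- The parent map of the unroll. -/
def unrollMap {α : Type} (f : α → α) (q : UnrollSet f) : UnrollSet f :=
  if h : q.1.2 = 0 then q
  else ⟨(f q.1.1, q.1.2 - 1), by
    obtain ⟨⟨x, k⟩, hq⟩ := q
    simp only at h
    obtain ⟨k', rfl⟩ := Nat.exists_eq_succ_of_ne_zero h
    simpa [UnrollSet, Function.iterate_succ_apply] using hq⟩

/-- Isomorphism of unrolls. -/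
def UnrollIso {α β : Type} (f : α → α) (g : β → β) : Prop :=
  ∃ φ : UnrollSet f ≃ UnrollSet g, ⇑φ ∘ unrollMap f = unrollMap g ∘ ⇑φ

/-- Vertices of the cut at depth `n` of the unroll. -/
def CutSet {α : Type} (f : α → α) (n : ℕ) : Set (α × ℕ) :=
  {p | p ∈ UnrollSet f ∧ p.2 ≤ n}

/-- The parent map of the cut at depth `n`. -/
def cutMap {α : Type} (f : α → α) (n : ℕ) (q : CutSet f n) : CutSet f n :=
  if h : q.1.2 = 0 then q
  else ⟨(f q.1.1, q.1.2 - 1), by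
    obtain ⟨⟨x, k⟩, hq⟩ := q
    obtain ⟨hq1, hq2⟩ := hq
    simp only at h hq2 ⊢
    obtain ⟨k', rfl⟩ := Nat.exists_eq_succ_of_ne_zero h
    refine ⟨by simpa [UnrollSet, Function.iterate_succ_apply] using hq1, by omega⟩⟩

/-- Isomorphism of cuts at depth `n`. -/
def CutIso {α β : Type} (f : α → α) (g : β → β) (n : ℕ) : Prop :=
  ∃ φ : CutSet f n ≃ CutSet g n, ⇑φ ∘ cutMap f n = cutMap g n ∘ ⇑φ

/-- The states of the components whose cycle length divides `p`. -/
def DivSet {α : Type} (f : α → α) (p : ℕ) : Set α :=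
  {x | ∃ N, f^[N + p] x = f^[N] x}

/-- The restriction of `f` to `DivSet f p`. -/
def divMap {α : Type} (f : α → α) (p : ℕ) (q : DivSet f p) : DivSet f p :=
  ⟨f q.1, by
    obtain ⟨x, N, hN⟩ := q
    exact ⟨N, by
      rw [← Function.iterate_succ_apply, ← Function.iterate_succ_apply,
        Function.iterate_succ_apply', Function.iterate_succ_apply', hN]⟩⟩

/-- `k`-th power of an FDDS: map on `Fin k → α`. -/
def powMap {α : Type} (f : α → α) (k : ℕ) (v : Fin k → α) : Fin k → α := f ∘ v

/-- Evaluation of the polynomial `Σ_{i=0}^m A_i X^i` at `(α, f)`. -/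
def polyEval {m : ℕ} {γ : Fin (m + 1) → Type} (g : ∀ i, γ i → γ i)
    {α : Type} (f : α → α)
    (x : Σ i : Fin (m + 1), γ i × (Fin i.val → α)) :
    Σ i : Fin (m + 1), γ i × (Fin i.val → α) :=
  ⟨x.1, g x.1 x.2.1, f ∘ x.2.2⟩

/-- Evaluation of the constant-free polynomial `Σ_{i=1}^m A_i X^i` at `(α, f)`. -/
def polyEvalNC {m : ℕ} {γ : Fin m → Type} (g : ∀ i, γ i → γ i)
    {α : Type} (f : α → α)
    (x : Σ i : Fin m, γ i × (Fin (i.val + 1) → α)) :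
    Σ i : Fin m, γ i × (Fin (i.val + 1) → α) :=
  ⟨x.1, g x.1 x.2.1, f ∘ x.2.2⟩

/-- An FDDS is cancelable if it can be canceled from products. -/
def Cancelable {α : Type} (f : α → α) : Prop :=
  ∀ (β γ : Type) [Fintype β] [Fintype γ] (g : β → β) (h : γ → γ),
    FddsIso (Prod.map f g) (Prod.map f h) → FddsIso g h

namespace PolyCancel
open Function

open Function

abbrev Hom {γ α : Type} (u : γ → γ) (f : α → α) : Type := {h : γ → α // ∀ x, h (u x) = f (h x)}

noncomputable def hc {γ α : Type} (u : γ → γ) (f : α → α) : ℕ := Nat.card (Hom u f)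

theorem hc_congr_right {γ α β : Type} (u : γ → γ) {f : α → α} {g : β → β}
    (h : FddsIso f g) : hc u f = hc u g := by
  obtain ⟨e, he⟩ := h
  have he' : ∀ x, e (f x) = g (e x) := fun x => congrFun he x
  refine Nat.card_congr ⟨fun h => ⟨e ∘ h.1, fun x => by simp [h.2 x, he']⟩,
    fun h => ⟨e.symm ∘ h.1, fun x => by
      simp only [Function.comp_apply, h.2 x]
      exact e.symm_apply_eq.2 (by rw [he', e.apply_symm_apply]) ⟩,
    fun h => Subtype.ext (funext fun x => by simp), fun h => Subtype.ext (funext fun x => by simp)⟩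

theorem hc_congr_left {γ δ α : Type} {u : γ → γ} {v : δ → δ} (f : α → α)
    (h : FddsIso u v) : hc u f = hc v f := by
  obtain ⟨e, he⟩ := h
  have he' : ∀ x, e (u x) = v (e x) := fun x => congrFun he x
  have he'' : ∀ y, u (e.symm y) = e.symm (v y) := fun y =>
    (Equiv.eq_symm_apply e).2 (by rw [he', e.apply_symm_apply])
  refine Nat.card_congr ⟨fun h => ⟨h.1 ∘ e.symm, fun y => by
      simp only [Function.comp_apply, ← h.2, he'']⟩,
    fun h => ⟨h.1 ∘ e, fun x => by simp [he', h.2]⟩,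
    fun h => Subtype.ext (funext fun x => by simp), fun h => Subtype.ext (funext fun x => by simp)⟩

theorem hc_prod {γ α β : Type} (u : γ → γ) (f : α → α) (g : β → β) :
    hc u (Prod.map f g) = hc u f * hc u g := by
  rw [hc, hc, hc, ← Nat.card_prod]
  exact Nat.card_congr ⟨fun h => (⟨fun x => (h.1 x).1, fun x => by simpa using congrArg Prod.fst (h.2 x)⟩,
      ⟨fun x => (h.1 x).2, fun x => by simpa using congrArg Prod.snd (h.2 x)⟩),
    fun p => ⟨fun x => (p.1.1 x, p.2.1 x), fun x => by
      simp only [Prod.map_apply, p.1.2 x, p.2.2 x]⟩,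
    fun h => Subtype.ext (funext fun x => rfl),
    fun p => Prod.ext (Subtype.ext (funext fun x => rfl)) (Subtype.ext (funext fun x => rfl))⟩

theorem hc_pow {γ α : Type} [Finite γ] [Finite α] (u : γ → γ) (f : α → α) (k : ℕ) :
    hc u (powMap f k) = (hc u f) ^ k := by
  have E : Hom u (powMap f k) ≃ (Fin k → Hom u f) :=
    ⟨fun h i => ⟨fun x => h.1 x i, fun x => congrFun (h.2 x) i⟩,
     fun p => ⟨fun x i => (p i).1 x, fun x => funext fun i => (p i).2 x⟩,
     fun h => Subtype.ext (funext fun x => rfl),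
     fun p => funext fun i => Subtype.ext (funext fun x => rfl)⟩
  rw [hc, Nat.card_congr E, Nat.card_pi, Finset.prod_const]
  simp [hc]


/-- Connectedness (including nonemptiness) of an FDDS. -/
def Conn {γ : Type} (u : γ → γ) : Prop :=
  Nonempty γ ∧ ∀ x y : γ, ∃ a b : ℕ, u^[a] x = u^[b] y

theorem hom_iterate {γ α : Type} {u : γ → γ} {f : α → α} (h : Hom u f) (a : ℕ) (x : γ) :
    h.1 (u^[a] x) = f^[a] (h.1 x) := by
  induction a with
  | zero => rfl
  | succ n ih => rw [Function.iterate_succ_apply', Function.iterate_succ_apply', h.2, ih]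

theorem hom_const_of_conn {γ α : Type} {u : γ → γ} {f : α → α} (hu : Conn u)
    (h : Hom u f) {β : Type} (φ : α → β) (hφ : ∀ y, φ (f y) = φ y) (x y : γ) :
    φ (h.1 x) = φ (h.1 y) := by
  obtain ⟨a, b, hab⟩ := hu.2 x y
  have iter : ∀ (c : ℕ) (z : α), φ (f^[c] z) = φ z := by
    intro c
    induction c with
    | zero => exact fun z => rfl
    | succ n ih => intro z; rw [Function.iterate_succ_apply', hφ, ih]
  have := congrArg (fun t => φ t) (congrArg h.1 hab)
  simpa [hom_iterate, iter] using this

theorem hc_id_of_conn {γ β : Type} (u : γ → γ) (hu : Conn u) [Finite β] :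
    hc u (id : β → β) = Nat.card β := by
  obtain ⟨x₀⟩ := hu.1
  refine Nat.card_congr ⟨fun h => h.1 x₀, fun b => ⟨fun _ => b, fun x => rfl⟩, ?_, fun b => rfl⟩
  intro h
  refine Subtype.ext (funext fun x => ?_)
  exact (hom_const_of_conn hu h (id) (fun y => rfl) x₀ x)

theorem sigma_eq_mk {ι : Type} {δ : ι → Type} {j : ι} (p : Σ i, δ i) (e : p.1 = j) :
    p = ⟨j, e ▸ p.2⟩ := by
  cases p; cases e; rfl

/-- Hom counts from a connected system into a disjoint union (sigma). -/
theorem hc_sigma {γ ι : Type} [Fintype ι] {δ : ι → Type} [∀ i, Finite (δ i)] [Finite γ]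
    (u : γ → γ) (hu : Conn u) (v : ∀ i, δ i → δ i) :
    hc u (fun p : Σ i, δ i => (⟨p.1, v p.1 p.2⟩ : Σ i, δ i)) = ∑ i, hc u (v i) := by
  classical
  obtain ⟨x₀⟩ := hu.1
  set σ : (Σ i, δ i) → Σ i, δ i := fun p => ⟨p.1, v p.1 p.2⟩ with hσ
  have key : ∀ (h : Hom u σ) (x : γ), (h.1 x).1 = (h.1 x₀).1 := by
    intro h x
    exact hom_const_of_conn hu h Sigma.fst (fun y => rfl) x x₀
  set F : (Σ i, Hom u (v i)) → Hom u σ := fun p =>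
    ⟨fun x => ⟨p.1, (p.2 : Hom u (v p.1)).1 x⟩, fun x => by
      show (⟨p.1, p.2.1 (u x)⟩ : Σ i, δ i) = ⟨p.1, v p.1 (p.2.1 x)⟩
      rw [p.2.2 x]⟩ with hF
  have hinj : Function.Injective F := by
    intro p q hpq
    have h0 : (⟨p.1, p.2.1 x₀⟩ : Σ i, δ i) = ⟨q.1, q.2.1 x₀⟩ := congrFun (congrArg Subtype.val hpq) x₀
    have h1 : p.1 = q.1 := congrArg (Sigma.fst (β := δ)) h0
    obtain ⟨i, hp⟩ := p; obtain ⟨j, hq⟩ := q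
    cases h1
    refine Sigma.ext rfl (heq_of_eq (Subtype.ext (funext fun x => ?_)))
    have := congrFun (congrArg Subtype.val hpq) x
    exact eq_of_heq (Sigma.mk.inj_iff.1 this).2
  have hsurj : Function.Surjective F := by
    intro h
    set j := (h.1 x₀).1 with hj
    have hcst : ∀ x, (h.1 x).1 = j := fun x => key h x
    refine ⟨⟨j, ⟨fun x => (hcst x) ▸ (h.1 x).2, fun x => ?_⟩⟩, ?_⟩
    · -- hom property
      have e1 : h.1 (u x) = ⟨j, (hcst (u x)) ▸ (h.1 (u x)).2⟩ := sigma_eq_mk _ (hcst (u x))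
      have e2 : h.1 (u x) = σ (h.1 x) := h.2 x
      have e3 : h.1 x = ⟨j, (hcst x) ▸ (h.1 x).2⟩ := sigma_eq_mk _ (hcst x)
      have e4 : σ (h.1 x) = ⟨j, v j ((hcst x) ▸ (h.1 x).2)⟩ := congrArg σ e3
      have := e1.symm.trans (e2.trans e4)
      exact eq_of_heq (Sigma.mk.inj_iff.1 this).2
    · refine Subtype.ext (funext fun x => ?_)
      exact (sigma_eq_mk _ (hcst x)).symm
  have : Nat.card (Hom u σ) = Nat.card (Σ i, Hom u (v i)) :=
    (Nat.card_congr (Equiv.ofBijective F ⟨hinj, hsurj⟩)).symm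
  rw [hc, this]
  haveI : ∀ i, Fintype (Hom u (v i)) := fun i => Fintype.ofFinite _
  rw [Nat.card_eq_fintype_card, Fintype.card_sigma]
  exact Finset.sum_congr rfl fun i _ => (Nat.card_eq_fintype_card).symm

section ComponentDecomp


variable {δ : Type} (w : δ → δ)

def connSetoid : Setoid δ :=
  ⟨fun x y => ∃ a b, w^[a] x = w^[b] y,
   fun x => ⟨0, 0, rfl⟩,
   fun {x y} h => by obtain ⟨a, b, h⟩ := h; exact ⟨b, a, h.symm⟩,
   fun {x y z} h1 h2 => by
     obtain ⟨a, b, h1⟩ := h1; obtain ⟨c, d, h2⟩ := h2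
     refine ⟨c + a, b + d, ?_⟩
     rw [Function.iterate_add_apply, h1, ← Function.iterate_add_apply, Nat.add_comm c b,
       Function.iterate_add_apply, h2, ← Function.iterate_add_apply]⟩

theorem mk_w_eq (x : δ) : Quotient.mk (connSetoid w) (w x) = Quotient.mk (connSetoid w) x :=
  Quotient.sound (show (connSetoid w) (w x) x from ⟨0, 1, by simp⟩)

def comp (q : Quotient (connSetoid w)) : Type := {x : δ // Quotient.mk (connSetoid w) x = q}

instance [Finite δ] (q : Quotient (connSetoid w)) : Finite (comp w q) := by
  unfold comp; infer_instance

def compMap (q : Quotient (connSetoid w)) (x : comp w q) : comp w q :=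
  ⟨w x.1, (mk_w_eq w x.1).trans x.2⟩

theorem compMap_iterate (q : Quotient (connSetoid w)) (a : ℕ) (x : comp w q) :
    ((compMap w q)^[a] x).1 = w^[a] x.1 := by
  induction a with
  | zero => rfl
  | succ n ih => rw [Function.iterate_succ_apply', Function.iterate_succ_apply', ← ih]; rfl

theorem conn_compMap (q : Quotient (connSetoid w)) : Conn (compMap w q) := by
  constructor
  · exact ⟨⟨q.out, Quotient.out_eq q⟩⟩
  · rintro ⟨x, hx⟩ ⟨y, hy⟩
    have : (connSetoid w) x y := Quotient.exact (hx.trans hy.symm)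
    obtain ⟨a, b, hab⟩ := this
    exact ⟨a, b, Subtype.ext ((compMap_iterate w q a ⟨x, hx⟩).trans (hab.trans (compMap_iterate w q b ⟨y, hy⟩).symm))⟩

theorem hc_eq_of_conn {α β : Type} [Finite α] [Finite β] {f : α → α} {f' : β → β}
    (H : ∀ (κ : Type), Finite κ → ∀ wk : κ → κ, Conn wk → hc wk f = hc wk f')
    [Finite δ] : hc w f = hc w f' := by
  classical
  have E : ∀ {ρ : Type} (g : ρ → ρ), Hom w g ≃ ∀ q, Hom (compMap w q) g := by
    intro ρ g
    have dep : ∀ (H : ∀ q, Hom (compMap w q) g) (q q' : Quotient (connSetoid w)) (e : q = q')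
        (y : δ) (hy : Quotient.mk _ y = q) (hy' : Quotient.mk _ y = q'),
        (H q).1 ⟨y, hy⟩ = (H q').1 ⟨y, hy'⟩ := by
      rintro H q q' rfl y hy hy'; rfl
    refine ⟨fun h q => ⟨fun x => h.1 x.1, fun x => h.2 x.1⟩,
      fun H => ⟨fun x => (H (Quotient.mk _ x)).1 ⟨x, rfl⟩, fun x => ?_⟩,
      fun h => Subtype.ext (funext fun x => rfl), fun H => funext fun q => Subtype.ext (funext fun x => ?_)⟩
    case _ =>
      show (H (Quotient.mk _ (w x))).1 ⟨w x, rfl⟩ = g ((H (Quotient.mk _ x)).1 ⟨x, rfl⟩)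
      rw [dep H (Quotient.mk _ (w x)) (Quotient.mk _ x) (mk_w_eq w x) (w x) rfl (mk_w_eq w x)]
      exact (H (Quotient.mk _ x)).2 ⟨x, rfl⟩
    obtain ⟨x, hx⟩ := x
    subst hx
    rfl
  haveI : Fintype (Quotient (connSetoid w)) := Fintype.ofFinite _
  rw [hc, hc, Nat.card_congr (E f), Nat.card_congr (E f'), Nat.card_pi, Nat.card_pi]
  exact Finset.prod_congr rfl fun q _ => H _ inferInstance _ (conn_compMap w q)

end ComponentDecomp


instance {κ : Type} [Finite κ] : Finite (Setoid κ) :=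
  Finite.of_injective (fun s => s.r)
    (fun s t h => Setoid.ext (fun a b => by rw [show s.r = t.r from h]))

abbrev IHom {γ α : Type} (u : γ → γ) (f : α → α) : Type :=
  {h : Hom u f // Function.Injective h.1}

noncomputable def ic {γ α : Type} (u : γ → γ) (f : α → α) : ℕ := Nat.card (IHom u f)

def Compat {γ : Type} (u : γ → γ) (r : Setoid γ) : Prop := ∀ x y, r x y → r (u x) (u y)

def qmap {γ : Type} (u : γ → γ) (r : {r : Setoid γ // Compat u r}) :
    Quotient r.1 → Quotient r.1 :=
  Quotient.map' u r.2

theorem qmap_mk {γ : Type} (u : γ → γ) (r : {r : Setoid γ // Compat u r}) (x : γ) :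
    qmap u r (Quotient.mk r.1 x) = Quotient.mk r.1 (u x) := rfl

theorem ic_congr_left {γ δ α : Type} {u : γ → γ} {v : δ → δ} (f : α → α)
    (h : FddsIso u v) : ic u f = ic v f := by
  obtain ⟨e, he⟩ := h
  have he' : ∀ x, e (u x) = v (e x) := fun x => congrFun he x
  have he'' : ∀ y, u (e.symm y) = e.symm (v y) := fun y =>
    (Equiv.eq_symm_apply e).2 (by rw [he', e.apply_symm_apply])
  refine Nat.card_congr
    ⟨fun h => ⟨⟨h.1.1 ∘ e.symm, fun y => by simp only [Function.comp_apply, ← h.1.2, he'']⟩,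
        h.2.comp e.symm.injective⟩,
     fun h => ⟨⟨h.1.1 ∘ e, fun x => by simp [he', h.1.2]⟩, h.2.comp e.injective⟩,
     fun h => Subtype.ext (Subtype.ext (funext fun x => by simp)),
     fun h => Subtype.ext (Subtype.ext (funext fun x => by simp))⟩

/-- decomposition of homs by kernel: `hc u f = ∑ ic (qmap u r) f`. -/
theorem hc_eq_sum_ic {γ α : Type} [Finite γ] [Finite α] (u : γ → γ) (f : α → α)
    [Fintype {r : Setoid γ // Compat u r}] :
    hc u f = ∑ r : {r : Setoid γ // Compat u r}, ic (qmap u r) f := by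
  classical
  set F : (Σ r : {r : Setoid γ // Compat u r}, IHom (qmap u r) f) → Hom u f :=
    fun p => ⟨p.2.1.1 ∘ Quotient.mk p.1.1, fun x => by
      simp only [Function.comp_apply, ← qmap_mk u p.1 x]
      exact p.2.1.2 (Quotient.mk p.1.1 x)⟩ with hF
  have hinj : Function.Injective F := by
    rintro ⟨⟨r, hr⟩, φ⟩ ⟨⟨r', hr'⟩, φ'⟩ hpq
    have hfun : φ.1.1 ∘ Quotient.mk r = φ'.1.1 ∘ Quotient.mk r' :=
      congrArg Subtype.val hpq
    have hrr : r = r' := by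
      refine Setoid.ext fun a b => ?_
      have ha := congrFun hfun a
      have hb := congrFun hfun b
      simp only [Function.comp_apply] at ha hb
      constructor
      · intro hab
        have h1 : φ.1.1 (Quotient.mk r a) = φ.1.1 (Quotient.mk r b) := by
          rw [Quotient.sound hab]
        have h2 : φ'.1.1 (Quotient.mk r' a) = φ'.1.1 (Quotient.mk r' b) := by
          rw [← ha, ← hb]; exact h1
        exact Quotient.exact (φ'.2 h2)
      · intro hab
        have h1 : φ'.1.1 (Quotient.mk r' a) = φ'.1.1 (Quotient.mk r' b) := by
          rw [Quotient.sound hab]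
        have h2 : φ.1.1 (Quotient.mk r a) = φ.1.1 (Quotient.mk r b) := by
          rw [ha, hb]; exact h1
        exact Quotient.exact (φ.2 h2)
    subst hrr
    refine Sigma.ext rfl (heq_of_eq (Subtype.ext (Subtype.ext (funext fun q => ?_))))
    induction q using Quotient.ind with
    | _ x => exact congrFun hfun x
  have hsurj : Function.Surjective F := by
    intro h
    set r : Setoid γ := Setoid.ker h.1 with hrdef
    have hcompat : Compat u r := by
      intro x y hxy
      show h.1 (u x) = h.1 (u y)
      rw [h.2 x, h.2 y, show h.1 x = h.1 y from hxy]
    refine ⟨⟨⟨r, hcompat⟩, ⟨⟨Quotient.lift h.1 (fun a b e => e), fun q => ?_⟩, ?_⟩⟩, ?_⟩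
    · induction q using Quotient.ind with
      | _ x => exact h.2 x
    · intro q q' he
      induction q using Quotient.ind with
      | _ x =>
        induction q' using Quotient.ind with
        | _ y => exact Quotient.sound he
    · exact Subtype.ext (funext fun x => rfl)
  have := Nat.card_congr (Equiv.ofBijective F ⟨hinj, hsurj⟩)
  rw [hc, ← this]
  haveI : ∀ r : {r : Setoid γ // Compat u r}, Fintype (IHom (qmap u r) f) :=
    fun r => Fintype.ofFinite _
  rw [Nat.card_eq_fintype_card, Fintype.card_sigma]
  exact Finset.sum_congr rfl fun r _ => (Nat.card_eq_fintype_card).symm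

def bot0 {γ : Type} (u : γ → γ) : {r : Setoid γ // Compat u r} :=
  ⟨Setoid.ker id, fun x y h => congrArg u h⟩

theorem iso_bot0 {γ : Type} (u : γ → γ) : FddsIso (qmap u (bot0 u)) u := by
  have hbij : Function.Bijective (Quotient.lift (id : γ → γ) (fun a b (h : (Setoid.ker id) a b) => h) :
      Quotient (bot0 u).1 → γ) := by
    constructor
    · intro q q' he
      induction q using Quotient.ind with
      | _ x =>
        induction q' using Quotient.ind with
        | _ y => exact Quotient.sound he
    · intro x
      exact ⟨Quotient.mk _ x, rfl⟩
  refine ⟨Equiv.ofBijective _ hbij, funext fun q => ?_⟩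
  induction q using Quotient.ind with
  | _ x => rfl

theorem card_quot_lt {γ : Type} [Finite γ] {r : Setoid γ} (hne : r ≠ Setoid.ker id) :
    Nat.card (Quotient r) < Nat.card γ := by
  classical
  haveI : Fintype γ := Fintype.ofFinite γ
  haveI : Fintype (Quotient r) := Fintype.ofFinite _
  obtain ⟨x, y, hxy, hne'⟩ : ∃ x y, r x y ∧ x ≠ y := by
    by_contra hcon
    push_neg at hcon
    exact hne (Setoid.ext fun a b =>
      ⟨fun h => hcon a b h, fun h => (show a = b from h) ▸ Setoid.refl a⟩)
  have hout : Function.Injective (Quotient.out : Quotient r → γ) := Quotient.out_injective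
  have hrange : ∀ m : γ, m ∈ Set.range (Quotient.out : Quotient r → γ) →
      m = (Quotient.mk r m).out := by
    rintro m ⟨q, rfl⟩
    congr 1
    exact (Quotient.out_eq q).symm
  have hq : (Quotient.mk r x) = (Quotient.mk r y) := Quotient.sound hxy
  have : x ∉ Set.range (Quotient.out : Quotient r → γ) ∨
      y ∉ Set.range (Quotient.out : Quotient r → γ) := by
    by_contra hcon
    push_neg at hcon
    exact hne' ((hrange x hcon.1).trans (by rw [hq, ← hrange y hcon.2]))
  rw [Nat.card_eq_fintype_card, Nat.card_eq_fintype_card]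
  rcases this with hm | hm
  · exact Fintype.card_lt_of_injective_of_notMem _ hout hm
  · exact Fintype.card_lt_of_injective_of_notMem _ hout hm

theorem ic_eq_of_hc_eq {α β : Type} [Finite α] [Finite β] {f : α → α} {g : β → β}
    (H : ∀ (κ : Type), Finite κ → ∀ wk : κ → κ, hc wk f = hc wk g) :
    ∀ (n : ℕ) (κ : Type) (_ : Finite κ) (wk : κ → κ), Nat.card κ = n → ic wk f = ic wk g := by
  intro n
  induction n using Nat.strong_induction_on with
  | _ n IH =>
    intro κ hκ wk hcard
    haveI := hκ
    classical
    haveI : Fintype {r : Setoid κ // Compat wk r} := Fintype.ofFinite _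
    have hsum_f := hc_eq_sum_ic wk f
    have hsum_g := hc_eq_sum_ic wk g
    have hhc := H κ hκ wk
    have hmem : bot0 wk ∈ (Finset.univ : Finset {r : Setoid κ // Compat wk r}) :=
      Finset.mem_univ _
    rw [← Finset.add_sum_erase _ _ hmem] at hsum_f hsum_g
    have hrest : ∀ r ∈ Finset.univ.erase (bot0 wk),
        ic (qmap wk r) f = ic (qmap wk r) g := by
      intro r hr
      have hne : r.1 ≠ Setoid.ker id := by
        intro hh
        exact (Finset.ne_of_mem_erase hr) (Subtype.ext hh)
      exact IH (Nat.card (Quotient r.1)) (hcard ▸ card_quot_lt hne) _ inferInstance _ rfl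
    rw [Finset.sum_congr rfl hrest] at hsum_f
    have hbot : ic (qmap wk (bot0 wk)) f = ic (qmap wk (bot0 wk)) g := by
      have := hsum_f.symm.trans (hhc.trans hsum_g)
      exact Nat.add_right_cancel this
    calc ic wk f = ic (qmap wk (bot0 wk)) f := (ic_congr_left f (iso_bot0 wk)).symm
      _ = ic (qmap wk (bot0 wk)) g := hbot
      _ = ic wk g := ic_congr_left g (iso_bot0 wk)

theorem lovasz {α β : Type} [Finite α] [Finite β] (f : α → α) (g : β → β)
    (H : ∀ (κ : Type), Finite κ → ∀ wk : κ → κ, hc wk f = hc wk g) : FddsIso f g := by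
  classical
  have hic : ∀ (κ : Type) (_ : Finite κ) (wk : κ → κ), ic wk f = ic wk g := by
    intro κ hκ wk
    exact ic_eq_of_hc_eq H (Nat.card κ) κ hκ wk rfl
  have hff : 0 < ic f f :=
    Nat.card_pos_iff.2 ⟨⟨⟨⟨id, fun x => rfl⟩, fun a b h => h⟩⟩, by unfold IHom Hom; infer_instance⟩
  have hgg : 0 < ic g g :=
    Nat.card_pos_iff.2 ⟨⟨⟨⟨id, fun x => rfl⟩, fun a b h => h⟩⟩, by unfold IHom Hom; infer_instance⟩
  have hfg : 0 < ic f g := (hic α inferInstance f) ▸ hff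
  have hgf : 0 < ic g f := by rw [hic β inferInstance g]; exact hgg
  obtain ⟨hAB⟩ := (Nat.card_pos_iff.1 hfg).1
  obtain ⟨hBA⟩ := (Nat.card_pos_iff.1 hgf).1
  have hcard : Nat.card α = Nat.card β :=
    le_antisymm (Nat.card_le_card_of_injective _ hAB.2) (Nat.card_le_card_of_injective _ hBA.2)
  haveI : Fintype α := Fintype.ofFinite α
  haveI : Fintype β := Fintype.ofFinite β
  have hbij : Function.Bijective hAB.1.1 :=
    (Fintype.bijective_iff_injective_and_card _).2 ⟨hAB.2, by
      rw [← Nat.card_eq_fintype_card, ← Nat.card_eq_fintype_card]; exact hcard⟩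
  exact ⟨Equiv.ofBijective _ hbij, funext fun x => hAB.1.2 x⟩


theorem exists_periodic {κ : Type} [Finite κ] [Nonempty κ] (w : κ → κ) :
    ∃ p, p ∈ periodicPts w := by
  obtain ⟨x₀⟩ := ‹Nonempty κ›
  obtain ⟨i, j, hne, hij⟩ := Finite.exists_ne_map_eq_of_infinite (fun n : ℕ => w^[n] x₀)
  rcases Nat.lt_or_ge i j with hlt | hge
  · refine ⟨w^[i] x₀, j - i, by omega, ?_⟩
    show w^[j-i] (w^[i] x₀) = w^[i] x₀
    rw [← Function.iterate_add_apply, Nat.sub_add_cancel (le_of_lt hlt), ← hij]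
  · have hlt : j < i := lt_of_le_of_ne hge (fun h => hne h.symm)
    refine ⟨w^[j] x₀, i - j, by omega, ?_⟩
    show w^[i-j] (w^[j] x₀) = w^[j] x₀
    rw [← Function.iterate_add_apply, Nat.sub_add_cancel (le_of_lt hlt), hij]

theorem iter_eq_dvd {κ : Type} {w : κ → κ} {p : κ} (hp : p ∈ periodicPts w)
    {m n : ℕ} (hmn : m ≤ n) (h : w^[m] p = w^[n] p) :
    minimalPeriod w p ∣ n - m := by
  have h1 : IsPeriodicPt w (n - m) (w^[m] p) := by
    show w^[n-m] (w^[m] p) = w^[m] p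
    rw [← Function.iterate_add_apply, Nat.sub_add_cancel hmn, ← h]
  have h2 : minimalPeriod w (w^[m] p) = minimalPeriod w p :=
    Function.minimalPeriod_apply_iterate hp m
  exact h2 ▸ h1.minimalPeriod_dvd

theorem cast_eq_of_dvd_sub {d m n : ℕ} [NeZero d] (hmn : m ≤ n) (h : d ∣ n - m) :
    (m : ZMod d) = (n : ZMod d) := by
  have he : n = m + (n - m) := by omega
  rw [he]
  push_cast
  rw [(ZMod.natCast_eq_zero_iff _ _).2 h, add_zero]

/-- number of homs from a connected system into a `d`-cycle. -/
theorem hc_cycle {κ : Type} [Finite κ] {w : κ → κ} (hconn : Conn w) {p : κ}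
    (hp : p ∈ periodicPts w) (d : ℕ) [NeZero d] :
    hc w (fun x : ZMod d => x + 1) = if d ∣ minimalPeriod w p then d else 0 := by
  classical
  have hiter : ∀ (h : Hom w (fun x : ZMod d => x + 1)) (a : ℕ) (x : κ),
      h.1 (w^[a] x) = h.1 x + (a : ZMod d) := by
    intro h a
    induction a with
    | zero => intro x; simp
    | succ n ih =>
      intro x
      rw [Function.iterate_succ_apply', h.2, ih]
      push_cast
      ring
  set ℓ := minimalPeriod w p with hℓ
  by_cases hd : d ∣ ℓ
  · rw [if_pos hd]
    have wd : ∀ (x : κ) (a b a' b' : ℕ), w^[a] p = w^[b] x → w^[a'] p = w^[b'] x →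
        (a : ZMod d) - (b : ZMod d) = (a' : ZMod d) - (b' : ZMod d) := by
      intro x a b a' b' h1 h2
      have k1 : w^[b' + a] p = w^[b' + b] x := by
        rw [Function.iterate_add_apply, h1, ← Function.iterate_add_apply]
      have k2 : w^[b + a'] p = w^[b + b'] x := by
        rw [Function.iterate_add_apply, h2, ← Function.iterate_add_apply]
      have key : w^[b' + a] p = w^[b + a'] p := by rw [k1, k2, Nat.add_comm b b']
      have hcast : ((b' + a : ℕ) : ZMod d) = ((b + a' : ℕ) : ZMod d) := by
        rcases le_total (b' + a) (b + a') with hle | hle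
        · exact cast_eq_of_dvd_sub hle (dvd_trans hd (iter_eq_dvd hp hle key))
        · exact (cast_eq_of_dvd_sub hle (dvd_trans hd (iter_eq_dvd hp hle key.symm))).symm
      push_cast at hcast
      rw [sub_eq_sub_iff_add_eq_add]
      linear_combination hcast
    choose A B hAB using fun x => hconn.2 p x
    have E : Hom w (fun x : ZMod d => x + 1) ≃ ZMod d := by
      refine ⟨fun h => h.1 p,
        fun c => ⟨fun x => c + (A x : ZMod d) - (B x : ZMod d), fun x => ?_⟩, ?_, ?_⟩
      · have h1 : w^[A x + 1] p = w^[B x] (w x) := by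
          rw [Function.iterate_succ_apply', hAB x, ← Function.iterate_succ_apply,
            Function.iterate_succ_apply']
        have hthis := wd (w x) (A (w x)) (B (w x)) (A x + 1) (B x) (hAB (w x)) h1
        push_cast at hthis ⊢
        linear_combination hthis
      · intro h
        refine Subtype.ext (funext fun x => ?_)
        have hthis := hiter h (A x) p
        rw [hAB x, hiter h (B x) x] at hthis
        simp only
        linear_combination -hthis
      · intro c
        have hthis := wd p (A p) (B p) 0 0 (hAB p) rfl
        push_cast at hthis
        simp only
        linear_combination hthis
    rw [hc, Nat.card_congr E, Nat.card_eq_fintype_card, ZMod.card]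
  · rw [if_neg hd, hc, Nat.card_eq_zero]
    left
    refine ⟨fun h => hd ?_⟩
    have h1 := hiter h ℓ p
    have h2 : w^[ℓ] p = p := isPeriodicPt_minimalPeriod w p
    rw [h2] at h1
    exact (ZMod.natCast_eq_zero_iff _ _).1 (left_eq_add.1 h1)


open scoped Classical in
/-- Triangular recursion producing rational coefficients whose divisor-sums vanish
on all "good" divisors of `L`. -/
noncomputable def qfun (L : ℕ) (G : ℕ → Prop) : ℕ → ℚ
  | d =>
    if h : d ∈ L.divisors ∧ G d ∧ d ≠ 1 then
      -(1/(d:ℚ)) * ∑ x ∈ (d.divisors.erase d).attach,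
        (x.1 : ℚ) * qfun L G x.1
    else if d = 1 then 1 else 0
  decreasing_by
    have hx := x.2
    have hd0 : 0 < d := Nat.pos_of_mem_divisors h.1
    have hdvd : x.1 ∣ d := (Nat.mem_divisors.1 (Finset.mem_of_mem_erase hx)).1
    have hne : x.1 ≠ d := Finset.ne_of_mem_erase hx
    exact lt_of_le_of_ne (Nat.le_of_dvd hd0 hdvd) hne

theorem qfun_one (L : ℕ) (G : ℕ → Prop) : qfun L G 1 = 1 := by
  rw [qfun]
  simp

theorem qfun_constraint (L : ℕ) (G : ℕ → Prop) (e : ℕ) (he : e ∈ L.divisors)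
    (hG : G e) (hne : e ≠ 1) :
    ∑ d ∈ e.divisors, (d : ℚ) * qfun L G d = 0 := by
  classical
  have he0 : 0 < e := Nat.pos_of_mem_divisors he
  have hmem : e ∈ e.divisors := Nat.mem_divisors_self e he0.ne'
  rw [← Finset.insert_erase hmem, Finset.sum_insert (Finset.notMem_erase e _)]
  have hq : qfun L G e = -(1/(e:ℚ)) * ∑ x ∈ (e.divisors.erase e).attach,
      (x.1 : ℚ) * qfun L G x.1 := by
    rw [qfun]
    rw [dif_pos ⟨he, hG, hne⟩]
  rw [hq, Finset.sum_attach (e.divisors.erase e) (fun d => (d : ℚ) * qfun L G d)]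
  have he0' : (e : ℚ) ≠ 0 := Nat.cast_ne_zero.2 he0.ne'
  field_simp
  ring

noncomputable def zden (L : ℕ) (G : ℕ → Prop) : ℕ := ∏ d ∈ L.divisors, (qfun L G d).den

theorem zden_pos (L : ℕ) (G : ℕ → Prop) : 0 < zden L G :=
  Finset.prod_pos (fun d _ => (qfun L G d).den_pos)

noncomputable def zfun (L : ℕ) (G : ℕ → Prop) (d : ℕ) : ℤ :=
  ((zden L G / (qfun L G d).den : ℕ) : ℤ) * (qfun L G d).num

theorem zfun_cast {L : ℕ} {G : ℕ → Prop} {d : ℕ} (hd : d ∈ L.divisors) :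
    ((zfun L G d : ℤ) : ℚ) = (zden L G : ℚ) * qfun L G d := by
  have hdvd : (qfun L G d).den ∣ zden L G := Finset.dvd_prod_of_mem _ hd
  obtain ⟨k, hk⟩ := hdvd
  have hden : ((qfun L G d).den : ℚ) ≠ 0 := Nat.cast_ne_zero.2 (qfun L G d).den_pos.ne'
  rw [zfun, hk, Nat.mul_div_cancel_left k (qfun L G d).den_pos]
  have h1 : ((qfun L G d).den : ℚ) * (qfun L G d) = (qfun L G d).num := by
    rw [mul_comm]
    exact_mod_cast Rat.mul_den_eq_num (qfun L G d)
  push_cast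
  rw [← h1]
  ring

theorem zfun_one (L : ℕ) (G : ℕ → Prop) : zfun L G 1 = zden L G := by
  rw [zfun, qfun_one]
  simp

theorem zfun_constraint (L : ℕ) (G : ℕ → Prop) (e : ℕ) (he : e ∈ L.divisors)
    (hG : G e) (hne : e ≠ 1) :
    ∑ d ∈ e.divisors, (d : ℤ) * zfun L G d = 0 := by
  have hL : L ≠ 0 := (Nat.mem_divisors.1 he).2
  have hsub : ∀ d ∈ e.divisors, d ∈ L.divisors := by
    intro d hd
    exact Nat.mem_divisors.2 ⟨dvd_trans (Nat.mem_divisors.1 hd).1 (Nat.mem_divisors.1 he).1, hL⟩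
  have hcast : ((∑ d ∈ e.divisors, (d : ℤ) * zfun L G d : ℤ) : ℚ) =
      (zden L G : ℚ) * ∑ d ∈ e.divisors, (d : ℚ) * qfun L G d := by
    push_cast
    rw [Finset.mul_sum]
    refine Finset.sum_congr rfl fun d hd => ?_
    rw [zfun_cast (hsub d hd)]
    ring
  rw [qfun_constraint L G e he hG hne, mul_zero] at hcast
  exact_mod_cast hcast


def Good {α : Type} (f : α → α) (n : ℕ) : Prop := ∃ a, f^[n] a = a

theorem minimalPeriod_le_card {α : Type} [Finite α] (f : α → α) (a : α) :
    minimalPeriod f a ≤ Nat.card α := by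
  classical
  haveI : Fintype α := Fintype.ofFinite α
  rw [Nat.card_eq_fintype_card]
  have hinj : Function.Injective (fun i : Fin (minimalPeriod f a) => f^[i.1] a) := by
    intro i j hij
    exact Fin.ext (iterate_injOn_Iio_minimalPeriod i.2 j.2 hij)
  exact (Fintype.card_fin (minimalPeriod f a)) ▸ Fintype.card_le_of_injective _ hinj

theorem good_gcd {α : Type} [Finite α] {f : α → α} (hnf : ∀ a, f a ≠ a) {ℓ : ℕ}
    (hl : 0 < ℓ) (hg : Good f ℓ) :
    Nat.gcd ℓ (Nat.card α).factorial ∈ ((Nat.card α).factorial).divisors ∧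
      Good f (Nat.gcd ℓ (Nat.card α).factorial) ∧ Nat.gcd ℓ (Nat.card α).factorial ≠ 1 := by
  obtain ⟨a, ha⟩ := hg
  have hap : a ∈ periodicPts f := ⟨ℓ, hl, ha⟩
  set s := minimalPeriod f a with hs
  have hs1 : 0 < s := Function.minimalPeriod_pos_of_mem_periodicPts hap
  have hs2 : s ≠ 1 := by
    intro h1
    exact hnf a (minimalPeriod_eq_one_iff_isFixedPt.1 h1)
  have hsl : s ∣ ℓ := IsPeriodicPt.minimalPeriod_dvd ha
  have hsL : s ∣ (Nat.card α).factorial :=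
    Nat.dvd_factorial hs1 (minimalPeriod_le_card f a)
  have hsg : s ∣ Nat.gcd ℓ (Nat.card α).factorial := Nat.dvd_gcd hsl hsL
  have hLpos : 0 < (Nat.card α).factorial := Nat.factorial_pos _
  refine ⟨Nat.mem_divisors.2 ⟨Nat.gcd_dvd_right _ _, hLpos.ne'⟩, ?_, ?_⟩
  · obtain ⟨k, hk⟩ := hsg
    exact ⟨a, by
      rw [hk]
      exact ((isPeriodicPt_minimalPeriod f a).mul_const k : _)⟩
  · intro h1
    rw [h1] at hsg
    exact hs2 (Nat.dvd_one.1 hsg)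

/-- index of divisors of `L`. -/
abbrev DivIdx (L : ℕ) : Type := {d : ℕ // d ∈ L.divisors}

instance (L : ℕ) (d : DivIdx L) : NeZero d.1 := ⟨(Nat.pos_of_mem_divisors d.2).ne'⟩

/-- disjoint union of cycles, with `mult d` copies of the `d`-cycle, `d ∣ L`. -/
abbrev CycType (L : ℕ) (mult : ℕ → ℕ) : Type := Σ d : DivIdx L, Fin (mult d.1) × ZMod d.1

def cycMap (L : ℕ) (mult : ℕ → ℕ) (p : CycType L mult) : CycType L mult :=
  ⟨p.1, p.2.1, p.2.2 + 1⟩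

theorem hc_cycType {κ : Type} [Finite κ] {w : κ → κ} (hconn : Conn w) {p : κ}
    (hp : p ∈ periodicPts w) (L : ℕ) (mult : ℕ → ℕ) :
    hc w (cycMap L mult) =
      ∑ d : DivIdx L, mult d.1 * (if d.1 ∣ minimalPeriod w p then d.1 else 0) := by
  classical
  have hrw : cycMap L mult = fun q : CycType L mult =>
      (⟨q.1, Prod.map (id : Fin (mult q.1.1) → Fin (mult q.1.1))
        (fun x : ZMod q.1.1 => x + 1) q.2⟩ : CycType L mult) := rfl
  rw [hrw, hc_sigma w hconn (fun (d : DivIdx L) => Prod.map (id : Fin (mult d.1) → Fin (mult d.1))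
    (fun x : ZMod d.1 => x + 1))]
  refine Finset.sum_congr rfl fun d _ => ?_
  rw [hc_prod, hc_id_of_conn w hconn, hc_cycle hconn hp d.1, Nat.card_eq_fintype_card,
    Fintype.card_fin]

theorem cyc_fixed (L : ℕ) (mult : ℕ → ℕ) (hL : L ≠ 0) (h1 : 0 < mult 1) :
    ∃ x, cycMap L mult x = x := by
  refine ⟨⟨⟨1, Nat.mem_divisors.2 ⟨one_dvd L, hL⟩⟩, ⟨0, h1⟩, 0⟩, ?_⟩
  unfold cycMap
  refine congrArg _ (Prod.ext rfl ?_)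
  exact Subsingleton.elim _ _

theorem cyc_no_fixed (L : ℕ) (mult : ℕ → ℕ) (hm : mult 1 = 0) :
    ∀ x, cycMap L mult x ≠ x := by
  rintro ⟨d, i, x⟩ h
  unfold cycMap at h
  have h2 : (⟨i, x + 1⟩ : Fin (mult d.1) × ZMod d.1) = ⟨i, x⟩ :=
    eq_of_heq (Sigma.mk.inj_iff.1 h).2
  have h3 : x + 1 = x := congrArg Prod.snd h2
  have h4 : ((1 : ℕ) : ZMod d.1) = 0 := by
    have := left_eq_add.1 h3.symm
    simpa using this
  have h5 : d.1 ∣ 1 := (ZMod.natCast_eq_zero_iff 1 d.1).1 h4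
  have h6 : d.1 = 1 := Nat.dvd_one.1 h5
  have h7 : mult d.1 = 0 := by rw [h6, hm]
  exact Nat.not_lt_zero i.1 (h7 ▸ i.2)

theorem cancelable_fixed_point {α : Type} [Fintype α] (f : α → α) (hA : Cancelable f) :
    ∃ a, f a = a := by
  classical
  by_contra hcon
  push_neg at hcon
  set L := (Nat.card α).factorial with hLdef
  have hL0 : L ≠ 0 := (Nat.factorial_pos _).ne'
  set G := Good f with hGdef
  set mb : ℕ → ℕ := fun d => (zfun L G d).toNat with hmb
  set mc : ℕ → ℕ := fun d => (-(zfun L G d)).toNat with hmc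
  have key : ∀ (κ : Type), Finite κ → ∀ w : κ → κ,
      hc w (Prod.map f (cycMap L mb)) = hc w (Prod.map f (cycMap L mc)) := by
    intro κ hκ w
    haveI := hκ
    apply hc_eq_of_conn
    intro κ' hκ' w' hconn
    haveI := hκ'
    rw [hc_prod, hc_prod]
    rcases Nat.eq_zero_or_pos (hc w' f) with h0 | hpos
    · rw [h0, zero_mul, zero_mul]
    · congr 1
      haveI : Nonempty κ' := hconn.1
      obtain ⟨p, hp⟩ := exists_periodic w'
      set ℓ := minimalPeriod w' p with hldef
      have hl1 : 0 < ℓ := Function.minimalPeriod_pos_of_mem_periodicPts hp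
      obtain ⟨h⟩ := (Nat.card_pos_iff.1 hpos).1
      have hgood : Good f ℓ := by
        refine ⟨h.1 p, ?_⟩
        rw [← hom_iterate h ℓ p, (isPeriodicPt_minimalPeriod w' p : w'^[ℓ] p = p)]
      have hLeq : (Nat.card α).factorial = L := rfl
      obtain ⟨hgcdmem, hgcdgood, hgcdne⟩ := good_gcd hcon hl1 hgood
      rw [hLeq] at hgcdmem hgcdgood hgcdne
      rw [hc_cycType hconn hp L mb, hc_cycType hconn hp L mc]
      -- prove equality via ℤ
      have hzero : ∑ d ∈ L.divisors, zfun L G d * (if d ∣ ℓ then (d:ℤ) else 0) = 0 := by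
        have h1 : ∑ d ∈ L.divisors, zfun L G d * (if d ∣ ℓ then (d:ℤ) else 0) =
            ∑ d ∈ L.divisors.filter (· ∣ ℓ), zfun L G d * d := by
          rw [Finset.sum_filter]
          refine Finset.sum_congr rfl fun d _ => ?_
          by_cases hdl : d ∣ ℓ <;> simp [hdl]
        have h2 : L.divisors.filter (· ∣ ℓ) = (Nat.gcd ℓ L).divisors := by
          ext d
          simp only [Finset.mem_filter, Nat.mem_divisors]
          constructor
          · rintro ⟨⟨hdL, _⟩, hdl⟩
            exact ⟨Nat.dvd_gcd hdl hdL, fun hg => by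
              have := Nat.gcd_eq_zero_iff.1 hg
              omega⟩
          · rintro ⟨hdg, _⟩
            exact ⟨⟨dvd_trans hdg (Nat.gcd_dvd_right _ _), hL0⟩,
              dvd_trans hdg (Nat.gcd_dvd_left _ _)⟩
        have h3 := zfun_constraint L G (Nat.gcd ℓ L) hgcdmem hgcdgood hgcdne
        rw [h1, h2, ← h3]
        exact Finset.sum_congr rfl fun d _ => mul_comm _ _
      -- now compare the two natural sums
      have hcast : ((∑ d : DivIdx L, mb d.1 * (if d.1 ∣ ℓ then d.1 else 0) : ℕ) : ℤ) =
          ((∑ d : DivIdx L, mc d.1 * (if d.1 ∣ ℓ then d.1 else 0) : ℕ) : ℤ) := by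
        push_cast
        rw [← sub_eq_zero, ← Finset.sum_sub_distrib]
        have : ∀ d : DivIdx L,
            (mb d.1 : ℤ) * (if d.1 ∣ ℓ then (d.1:ℤ) else 0) -
            (mc d.1 : ℤ) * (if d.1 ∣ ℓ then (d.1:ℤ) else 0) =
            zfun L G d.1 * (if d.1 ∣ ℓ then (d.1:ℤ) else 0) := by
          intro d
          rw [← sub_mul]
          congr 1
          exact Int.toNat_sub_toNat_neg (zfun L G d.1)
        calc ∑ d : DivIdx L, ((mb d.1 : ℤ) * (if d.1 ∣ ℓ then (d.1:ℤ) else 0) -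
              (mc d.1 : ℤ) * (if d.1 ∣ ℓ then (d.1:ℤ) else 0))
            = ∑ d : DivIdx L, zfun L G d.1 * (if d.1 ∣ ℓ then (d.1:ℤ) else 0) :=
              Finset.sum_congr rfl fun d _ => this d
          _ = ∑ d ∈ L.divisors, zfun L G d * (if d ∣ ℓ then (d:ℤ) else 0) :=
              Finset.sum_coe_sort L.divisors (fun d => zfun L G d * (if d ∣ ℓ then (d:ℤ) else 0))
          _ = 0 := hzero
      exact_mod_cast hcast
  have hiso := lovasz (Prod.map f (cycMap L mb)) (Prod.map f (cycMap L mc)) key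
  have hBC := hA _ _ (cycMap L mb) (cycMap L mc) hiso
  have hb1 : 0 < mb 1 := by
    rw [hmb]
    simp only [zfun_one]
    rw [Int.toNat_natCast]
    exact zden_pos L G
  obtain ⟨x, hx⟩ := cyc_fixed L mb hL0 hb1
  obtain ⟨e, he⟩ := hBC
  have hfix : cycMap L mc (e x) = e x := by
    have h1 := congrFun he x
    simp only [Function.comp_apply] at h1
    rw [hx] at h1
    exact h1.symm
  have hmc1 : mc 1 = 0 := by
    rw [hmc]
    simp only [zfun_one]
    rw [Int.toNat_eq_zero]
    have := zden_pos L G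
    omega
  exact cyc_no_fixed L mc hmc1 (e x) hfix


theorem nat_poly_inj {m : ℕ} (c : Fin (m+1) → ℕ) (i₀ : Fin (m+1)) (h1 : 1 ≤ i₀.val)
    (h2 : 1 ≤ c i₀) {x y : ℕ}
    (h : ∑ i, c i * x ^ i.val = ∑ i, c i * y ^ i.val) : x = y := by
  rcases lt_trichotomy x y with hlt | heq | hlt
  · exfalso
    have hsum : ∑ i, c i * x ^ i.val < ∑ i, c i * y ^ i.val := by
      refine Finset.sum_lt_sum (fun i _ => Nat.mul_le_mul_left _
        (Nat.pow_le_pow_left (le_of_lt hlt) _)) ⟨i₀, Finset.mem_univ _, ?_⟩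
      have hp : x ^ i₀.val < y ^ i₀.val := Nat.pow_lt_pow_left hlt (by omega)
      exact mul_lt_mul_of_pos_left hp h2
    omega
  · exact heq
  · exfalso
    have hsum : ∑ i, c i * y ^ i.val < ∑ i, c i * x ^ i.val := by
      refine Finset.sum_lt_sum (fun i _ => Nat.mul_le_mul_left _
        (Nat.pow_le_pow_left (le_of_lt hlt) _)) ⟨i₀, Finset.mem_univ _, ?_⟩
      have hp : y ^ i₀.val < x ^ i₀.val := Nat.pow_lt_pow_left hlt (by omega)
      exact mul_lt_mul_of_pos_left hp h2
    omega

theorem hc_polyEval {m : ℕ} {γ : Fin (m + 1) → Type} [∀ i, Finite (γ i)]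
    (g : ∀ i, γ i → γ i) {α : Type} [Finite α] (f : α → α)
    {κ : Type} [Finite κ] {w : κ → κ} (hconn : Conn w) :
    hc w (polyEval g f) = ∑ i : Fin (m+1), hc w (g i) * hc w f ^ i.val := by
  have hrw : polyEval g f = fun p : Σ i : Fin (m + 1), γ i × (Fin i.val → α) =>
      (⟨p.1, Prod.map (g p.1) (powMap f p.1.val) p.2⟩ :
        Σ i : Fin (m + 1), γ i × (Fin i.val → α)) := rfl
  rw [hrw, hc_sigma w hconn (fun i : Fin (m+1) => Prod.map (g i) (powMap f i.val))]
  exact Finset.sum_congr rfl fun i _ => by rw [hc_prod, hc_pow]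


end PolyCancel

/-- A polynomial `P = Σ_{i=0}^m A_i X^i` with at least one cancelable
non-constant coefficient is injective up to isomorphism. -/
theorem poly_injective_of_cancelable {m : ℕ} {γ : Fin (m + 1) → Type} [∀ i, Fintype (γ i)]
    (g : ∀ i, γ i → γ i) (hc : ∃ i : Fin (m + 1), 1 ≤ i.val ∧ Cancelable (g i))
    {α β : Type} [Fintype α] [Fintype β] (f : α → α) (f' : β → β)
    (h : FddsIso (polyEval g f) (polyEval g f')) :
    FddsIso f f' := by
  classical
  obtain ⟨i₀, hi₀, hcan⟩ := hc
  obtain ⟨z, hz⟩ := PolyCancel.cancelable_fixed_point (g i₀) hcan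
  have hcc : ∀ (κ : Type), Finite κ → ∀ w : κ → κ, PolyCancel.Conn w →
      PolyCancel.hc w f = PolyCancel.hc w f' := by
    intro κ hκ w hconn
    haveI := hκ
    have h1 := PolyCancel.hc_congr_right w h
    rw [PolyCancel.hc_polyEval g f hconn, PolyCancel.hc_polyEval g f' hconn] at h1
    have hpos : 1 ≤ PolyCancel.hc w (g i₀) :=
      Nat.card_pos_iff.2 ⟨⟨⟨fun _ => z, fun x => hz.symm⟩⟩, by infer_instance⟩
    exact PolyCancel.nat_poly_inj (fun i => PolyCancel.hc w (g i)) i₀ hi₀ hpos h1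
  exact PolyCancel.lovasz f f' fun κ hκ w => by
    haveI := hκ
    exact PolyCancel.hc_eq_of_conn w hcc
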